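/- For the Suffridge polynomial q_3(z) = z + (2√2/3) z^2 + (1/3) z^3, the minimum of |q_3(z)| over the unit circle equals 2/(3√3), attained at the points z = -2√2/3 ± (1/3)i, and in particular this minimum is strictly greater than (3-√5)/2. -/

import Mathlib

open Complex

lemma key_normSq (x y a : ℝ) (ha : a ^ 2 = 2) (h : x ^ 2 + y ^ 2 = 1) :
    Complex.normSq (Complex.mk x y + (2 * a / 3 : ℝ) * (Complex.mk x y) ^ 2
      + (1 / 3 : ℝ) * (Complex.mk x y) ^ 3)
    = 4 / 3 * (x + 2 * a / 3) ^ 2 + 4 / 27 := by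
  simp only [Complex.normSq_apply, Complex.add_re, Complex.add_im, Complex.mul_re,
    Complex.mul_im, Complex.ofReal_re, Complex.ofReal_im, pow_succ, pow_zero, one_mul,
    Complex.one_re, Complex.one_im]
  linear_combination ((4/9) + (4/9)*a^2 + (-5/9)*y^2 + (4/9)*y^2*a^2 + (1/9)*y^4 + (16/9)*x*a + (4/9)*x*y^2*a + (7/9)*x^2 + (4/9)*x^2*a^2 + (2/9)*x^2*y^2 + (4/9)*x^3*a + (1/9)*x^4) * h + (-4/27 : ℝ) * ha

theorem stmt_15 (q₃ : ℂ → ℂ)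
    (hq₃ : ∀ z, q₃ z = z + (2 * Real.sqrt 2 / 3 : ℝ) * z ^ 2 + (1 / 3 : ℝ) * z ^ 3) :
    IsLeast {r : ℝ | ∃ z : ℂ, ‖z‖ = 1 ∧ r = ‖q₃ z‖} (2 / (3 * Real.sqrt 3)) ∧
      ‖q₃ (Complex.mk (-(2 * Real.sqrt 2) / 3) (1 / 3))‖ = 2 / (3 * Real.sqrt 3) ∧
      ‖q₃ (Complex.mk (-(2 * Real.sqrt 2) / 3) (-(1 / 3)))‖ = 2 / (3 * Real.sqrt 3) ∧
      (3 - Real.sqrt 5) / 2 < 2 / (3 * Real.sqrt 3) := by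
  have ha : (Real.sqrt 2) ^ 2 = 2 := Real.sq_sqrt (by norm_num)
  have h3 : (Real.sqrt 3) ^ 2 = 3 := Real.sq_sqrt (by norm_num)
  have h3pos : 0 < Real.sqrt 3 := Real.sqrt_pos.mpr (by norm_num)
  have hMpos : 0 < 2 / (3 * Real.sqrt 3) := by positivity
  have hMsq : (2 / (3 * Real.sqrt 3)) ^ 2 = 4 / 27 := by
    rw [div_pow, mul_pow, h3]; norm_num
  have hM : Real.sqrt (4 / 27) = 2 / (3 * Real.sqrt 3) := by
    rw [← hMsq, Real.sqrt_sq hMpos.le]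
  -- norm formula
  have hnorm : ∀ x y : ℝ, x ^ 2 + y ^ 2 = 1 →
      ‖q₃ (Complex.mk x y)‖ = Real.sqrt (4 / 3 * (x + 2 * Real.sqrt 2 / 3) ^ 2 + 4 / 27) := by
    intro x y h
    rw [hq₃, Complex.norm_def, key_normSq x y _ ha h]
  have hmem1 : ((-(2 * Real.sqrt 2) / 3) : ℝ) ^ 2 + ((1:ℝ) / 3) ^ 2 = 1 := by
    nlinarith [ha]
  have hmem2 : ((-(2 * Real.sqrt 2) / 3) : ℝ) ^ 2 + (-(1:ℝ) / 3) ^ 2 = 1 := by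
    nlinarith [ha]
  have hval : ∀ y : ℝ, (-(2 * Real.sqrt 2) / 3) ^ 2 + y ^ 2 = 1 →
      ‖q₃ (Complex.mk (-(2 * Real.sqrt 2) / 3) y)‖ = 2 / (3 * Real.sqrt 3) := by
    intro y hy
    rw [hnorm _ _ hy, ← hM]
    congr 1
    ring
  have hnorm1 : ∀ (x y : ℝ), x ^ 2 + y ^ 2 = 1 → ‖Complex.mk x y‖ = 1 := by
    intro x y h
    rw [Complex.norm_def]
    have : Complex.normSq (Complex.mk x y) = 1 := by
      simp [Complex.normSq_apply]; nlinarith [h]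
    rw [this, Real.sqrt_one]
  refine ⟨⟨⟨Complex.mk (-(2 * Real.sqrt 2) / 3) (1 / 3), hnorm1 _ _ hmem1,
      (hval _ hmem1).symm⟩, ?_⟩, hval _ hmem1, ?_, ?_⟩
  · rintro r ⟨z, hz, rfl⟩
    obtain ⟨x, y⟩ := z
    have hxy : x ^ 2 + y ^ 2 = 1 := by
      have := congrArg (fun t => t ^ 2) hz
      rw [Complex.sq_norm, Complex.normSq_apply] at this
      nlinarith [this]
    rw [hnorm x y hxy, ← hM]
    apply Real.sqrt_le_sqrt
    nlinarith [sq_nonneg (x + 2 * Real.sqrt 2 / 3)]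
  · have : (-(1:ℝ)/3) = -(1/3 : ℝ) := by norm_num
    rw [← this]
    exact hval _ hmem2
  · have h5 : Real.sqrt 5 > 2.236 := by
      nlinarith [Real.sq_sqrt (show (0:ℝ) ≤ 5 by norm_num), Real.sqrt_nonneg 5]
    have h3' : Real.sqrt 3 < 1.7321 := by
      nlinarith [h3, h3pos]
    rw [div_lt_div_iff₀ (by norm_num) (by positivity)]
    nlinarith [h5, h3', h3pos]
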